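/- Let z : ℝ → ℂ be a parametrised curve that is twice differentiable at s with z′(s) ≠ 0. Then lim_{t → s} Im( z′(s)·( conj(z(s)) − conj(z(t)) ) ) / ( conj(z(s)) − conj(z(t)) )² = Im( z″(s)·conj(z′(s)) ) / ( 2·conj(z′(s))² ), where the limit is a limit of complex numbers. -/

import Mathlib

open Filter Complex

/-- Finite diagonal limit of the kernel `M⁽²⁾`:
`Im(z'(s)(conj z(s) - conj z(t)))/(conj z(s) - conj z(t))²
  → Im(z''(s) conj z'(s))/(2 conj z'(s)²)` as `t → s`. -/
theorem double_layer_kernel_M2_diagonal_limit (z z' : ℝ → ℂ) (z'' : ℂ) (s : ℝ)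
    (hz : ∀ᶠ t in nhds s, HasDerivAt z (z' t) t)
    (hz'' : HasDerivAt z' z'' s) (h0 : z' s ≠ 0) :
    Filter.Tendsto (fun t : ℝ =>
        (((z' s * (starRingEnd ℂ (z s) - starRingEnd ℂ (z t))).im : ℂ)
          / (starRingEnd ℂ (z s) - starRingEnd ℂ (z t)) ^ 2))
      (nhdsWithin s {s}ᶜ)
      (nhds (((z'' * starRingEnd ℂ (z' s)).im : ℂ)
        / (2 * (starRingEnd ℂ (z' s)) ^ 2))) := by
  set C := starRingEnd ℂ with hC
  set D : ℝ → ℂ := fun t => C (z s) - C (z t) with hD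
  set u : ℝ → ℝ := fun t => (z' s * D t).im with hu
  set ψ : ℝ → ℝ := fun t => -(z' s * C (z' t)).im with hψ
  -- derivative of u near s
  have hu' : ∀ᶠ t in nhds s, HasDerivAt u (ψ t) t := by
    filter_upwards [hz] with t ht
    have h1 : HasDerivAt (fun t => C (z t)) (C (z' t)) t :=
      Complex.conjCLE.hasFDerivAt.comp_hasDerivAt t ht
    have h2 : HasDerivAt (fun t => z' s * D t) (z' s * (0 - C (z' t))) t :=
      ((hasDerivAt_const t (C (z s))).sub h1).const_mul (z' s)
    have h3 := Complex.imCLM.hasFDerivAt.comp_hasDerivAt t h2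
    simpa [hu, hψ, mul_sub, Function.comp_def] using h3
  -- ψ s = 0
  have hψs : ψ s = 0 := by
    simp [hψ, hC, Complex.mul_im, Complex.conj_re, Complex.conj_im]
    ring
  -- derivative of ψ at s
  have hψ' : HasDerivAt ψ ((z'' * C (z' s)).im) s := by
    have h1 : HasDerivAt (fun t => C (z' t)) (C z'') s :=
      Complex.conjCLE.hasFDerivAt.comp_hasDerivAt s hz''
    have h2 : HasDerivAt (fun t => z' s * C (z' t)) (z' s * C z'') s := h1.const_mul _
    have h3 : HasDerivAt ψ (-(z' s * C z'').im) s := by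
      simpa [hψ, Function.comp_def, Pi.neg_def] using (Complex.imCLM.hasFDerivAt.comp_hasDerivAt s h2).neg
    have he : -(z' s * C z'').im = (z'' * C (z' s)).im := by
      simp [hC, Complex.mul_im, Complex.conj_re, Complex.conj_im]; ring
    rwa [he] at h3
  -- real limit of u t / (t-s)^2
  have hreal : Tendsto (fun t => u t / (t - s) ^ 2) (nhdsWithin s {s}ᶜ)
      (nhds ((z'' * C (z' s)).im / 2)) := by
    apply HasDerivAt.lhopital_zero_nhdsNE (f' := ψ) (g' := fun t => 2 * (t - s))
    · exact hu'.filter_mono nhdsWithin_le_nhds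
    · filter_upwards with t
      simpa [Pi.pow_def] using (((hasDerivAt_id t).sub_const s).pow 2)
    · filter_upwards [self_mem_nhdsWithin] with t ht
      simp only [Set.mem_compl_iff, Set.mem_singleton_iff] at ht
      exact mul_ne_zero two_ne_zero (sub_ne_zero.mpr ht)
    · have hc : ContinuousAt u s := (hu'.self_of_nhds).continuousAt
      have h4 : u s = 0 := by simp [hu, hD]
      rw [← h4]
      exact hc.continuousWithinAt.tendsto
    · have h5 : Tendsto (fun t : ℝ => (t - s) ^ 2) (nhds s) (nhds ((s - s) ^ 2)) :=
        ((continuous_id.sub continuous_const).pow 2).tendsto s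
      simpa using h5.mono_left nhdsWithin_le_nhds
    · have hslope := hasDerivAt_iff_tendsto_slope.mp hψ'
      refine Tendsto.congr' ?_ (hslope.div_const 2)
      filter_upwards [self_mem_nhdsWithin] with t ht
      simp only [Set.mem_compl_iff, Set.mem_singleton_iff] at ht
      rw [slope_def_field, hψs]
      field_simp
      ring
  -- limit of the factor D t / (t - s)
  have hDslope : Tendsto (fun t => D t / ((t : ℂ) - (s : ℂ))) (nhdsWithin s {s}ᶜ)
      (nhds (-C (z' s))) := by
    have hslope := hasDerivAt_iff_tendsto_slope.mp (hz.self_of_nhds)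
    have hcont : Tendsto (fun w : ℂ => -C w) (nhds (z' s)) (nhds (-C (z' s))) :=
      (Complex.continuous_conj.neg).continuousAt
    refine Tendsto.congr' ?_ (hcont.comp hslope)
    filter_upwards [self_mem_nhdsWithin] with t ht
    simp only [Set.mem_compl_iff, Set.mem_singleton_iff] at ht
    have hts : ((t : ℂ) - (s : ℂ)) ≠ 0 := by
      have := Complex.ofReal_ne_zero.mpr (sub_ne_zero.mpr ht)
      push_cast at this
      exact this
    simp only [Function.comp, slope_def_module, hD]
    rw [Complex.real_smul, map_mul, map_sub, Complex.conj_ofReal]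
    push_cast
    field_simp
    ring
  -- second factor tendsto
  have h2nd : Tendsto (fun t : ℝ => (((t : ℂ) - (s : ℂ)) / D t) ^ 2) (nhdsWithin s {s}ᶜ)
      (nhds ((C (z' s))⁻¹ ^ 2)) := by
    have hne : -C (z' s) ≠ 0 := by
      simp [hC, h0]
    have hinv := hDslope.inv₀ hne
    have := hinv.pow 2
    have heq : ((-C (z' s))⁻¹) ^ 2 = (C (z' s))⁻¹ ^ 2 := by
      rw [inv_neg]; ring
    rw [heq] at this
    refine Tendsto.congr ?_ this
    intro t
    rw [inv_div]
  -- first factor tendsto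
  have h1st : Tendsto (fun t => ((u t / (t - s) ^ 2 : ℝ) : ℂ)) (nhdsWithin s {s}ᶜ)
      (nhds (((z'' * C (z' s)).im / 2 : ℝ) : ℂ)) :=
    (Complex.continuous_ofReal.tendsto _).comp hreal
  have hprod := h1st.mul h2nd
  have hc0 : C (z' s) ≠ 0 := by simp [hC, h0]
  have hval : (((z'' * C (z' s)).im : ℂ)) / (2 * (C (z' s)) ^ 2)
      = (((z'' * C (z' s)).im / 2 : ℝ) : ℂ) * ((C (z' s))⁻¹) ^ 2 := by
    push_cast
    field_simp
  rw [hval]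
  refine Tendsto.congr' ?_ hprod
  filter_upwards [self_mem_nhdsWithin] with t ht
  simp only [Set.mem_compl_iff, Set.mem_singleton_iff] at ht
  have hr : ((t - s : ℝ) : ℂ) ≠ 0 := Complex.ofReal_ne_zero.mpr (sub_ne_zero.mpr ht)
  show (((u t / (t - s) ^ 2 : ℝ) : ℂ)) * (((t : ℂ) - (s : ℂ)) / D t) ^ 2
      = ((u t : ℝ) : ℂ) / D t ^ 2
  push_cast
  by_cases hd : D t = 0
  · simp [hd]
  · have hr' : ((t : ℂ) - (s : ℂ)) ≠ 0 := by push_cast at hr; exact hr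
    field_simp
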